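/- For every α ∈ [1,∞) there exists a constant C_α > 0, independent of k, such that for every integer k ≥ 3 and every φ ∈ L^α([0,R_s], r^{n−1}dr): (∫₀^{R_s}|(𝒦_k φ)(r)|^α r^{n−1} dr)^{1/α} ≤ C_α k^{−1} (∫₀^{R_s}|φ(r)|^α r^{n−1} dr)^{1/α}. (This is estimate (5.8) used in the proof of Lemma 5.2.) -/

import Mathlib

open Set Real intervalIntegral MeasureTheory

open ENNReal

-- integral of x^(-(m+1)) over [a,b], bounded
lemma int_zpow_le {a b : ℝ} (ha : 0 < a) (hab : a ≤ b) {m : ℕ} (hm : 1 ≤ m) :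
    ∫ x in a..b, x ^ (-(m:ℤ)-1) ≤ (a ^ m)⁻¹ / m := by
  have hb : 0 < b := lt_of_lt_of_le ha hab
  have h0 : (0:ℝ) ∉ Set.uIcc a b := by
    rw [Set.uIcc_of_le hab]
    exact fun h => absurd h.1 (not_le.mpr ha)
  rw [integral_zpow (Or.inr ⟨by omega, h0⟩)]
  have he : (-(m:ℤ)-1) + 1 = -(m:ℤ) := by ring
  rw [he]
  have hza : a ^ (-(m:ℤ)) = (a ^ m)⁻¹ := by
    rw [zpow_neg, zpow_natCast]
  have hzb : b ^ (-(m:ℤ)) = (b ^ m)⁻¹ := by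
    rw [zpow_neg, zpow_natCast]
  rw [hza, hzb]
  have hc : ((-(m:ℤ)-1 : ℤ) : ℝ) + 1 = -(m:ℝ) := by push_cast; ring
  rw [hc, div_neg, ← neg_div, neg_sub]
  have hbm : (0:ℝ) ≤ (b ^ m)⁻¹ := by positivity
  gcongr
  exact sub_le_self _ hbm

-- integral of x^m from 0 to c
lemma int_pow_eq {c : ℝ} (m : ℕ) :
    ∫ x in (0:ℝ)..c, x ^ m = c ^ (m+1) / (m+1) := by
  rw [integral_pow]
  simp

lemma lint_ofReal_Ioc {a b : ℝ} (hab : a ≤ b) {g : ℝ → ℝ} (hg : IntegrableOn g (Ioc a b))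
    (h0 : ∀ x ∈ Ioc a b, 0 ≤ g x) :
    ∫⁻ x in Ioc a b, ENNReal.ofReal (g x) = ENNReal.ofReal (∫ x in a..b, g x) := by
  rw [intervalIntegral.integral_of_le hab,
    ← ofReal_integral_eq_lintegral_ofReal hg ((ae_restrict_iff' measurableSet_Ioc).2 (ae_of_all _ h0))]

lemma lint_le_of_int {u v c : ℝ} (huv : u ≤ v) {g : ℝ → ℝ} (hg : IntegrableOn g (Ioc u v))
    (h0 : ∀ x ∈ Ioc u v, 0 ≤ g x) (hb : (∫ x in u..v, g x) ≤ c) :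
    ∫⁻ x in Ioc u v, ENNReal.ofReal (g x) ≤ ENNReal.ofReal c := by
  rw [lint_ofReal_Ioc huv hg h0]
  exact ofReal_le_ofReal hb

lemma ofReal_int_le (g : ℝ → ℝ) (μ : Measure ℝ) :
    ENNReal.ofReal (∫ x, g x ∂μ) ≤ ∫⁻ x, ENNReal.ofReal (g x) ∂μ := by
  by_cases hg : Integrable g μ
  · have h1 : ∫ x, g x ∂μ ≤ ∫ x, max (g x) 0 ∂μ :=
      integral_mono hg (hg.pos_part) (fun x => le_max_left _ _)
    calc ENNReal.ofReal (∫ x, g x ∂μ) ≤ ENNReal.ofReal (∫ x, max (g x) 0 ∂μ) :=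
          ofReal_le_ofReal h1
      _ = ∫⁻ x, ENNReal.ofReal (max (g x) 0) ∂μ :=
          ofReal_integral_eq_lintegral_ofReal hg.pos_part (ae_of_all _ fun x => le_max_right _ _)
      _ = ∫⁻ x, ENNReal.ofReal (g x) ∂μ := by
          refine lintegral_congr fun x => ?_
          rcases le_total (g x) 0 with h | h
          · rw [max_eq_right h, ENNReal.ofReal_zero, ENNReal.ofReal_of_nonpos h]
          · rw [max_eq_left h]
  · rw [integral_undef hg]
    simp

lemma schur_aux {μ : Measure ℝ} [SigmaFinite μ] {K : ℝ → ℝ → ℝ≥0∞} {f w : ℝ → ℝ≥0∞}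
    (hK : Measurable (Function.uncurry K)) (hf : Measurable f) (hw : Measurable w)
    (hffin : ∀ x, f x ≠ ∞) (hwfin : ∀ x, w x ≠ ∞)
    {α : ℝ} (hα : 1 ≤ α) {A B : ℝ≥0∞} (hAfin : A ≠ ∞) (hBfin : B ≠ ∞)
    (hA : ∀ᵐ r ∂μ, (∫⁻ ρ, K r ρ * w ρ ∂μ) ≤ A)
    (hB : ∀ᵐ ρ ∂μ, (∫⁻ r, K r ρ * w r ∂μ) ≤ B) :
    ∫⁻ r, (∫⁻ ρ, K r ρ * f ρ * w ρ ∂μ) ^ α * w r ∂μ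
      ≤ A ^ (α - 1) * B * ∫⁻ ρ, f ρ ^ α * w ρ ∂μ := by
  have hα0 : (0:ℝ) < α := lt_of_lt_of_le zero_lt_one hα
  have hα' : α ≠ 0 := ne_of_gt hα0
  have hKr : ∀ r, Measurable (K r) := fun r => hK.of_uncurry_left
  -- pointwise Hölder step
  have key : ∀ r : ℝ, (∫⁻ ρ, K r ρ * w ρ ∂μ) ≤ A →
      (∫⁻ ρ, K r ρ * f ρ * w ρ ∂μ) ^ α ≤ A ^ (α - 1) * ∫⁻ ρ, K r ρ * f ρ ^ α * w ρ ∂μ := by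
    intro r hAr
    rcases eq_or_lt_of_le hα with h1 | h1
    · rw [← h1]
      simp only [sub_self, ENNReal.rpow_one, ENNReal.rpow_zero, one_mul]
      exact le_rfl
    · set q : ℝ := α / (α - 1) with hq
      have hpq : q.HolderConjugate α := (Real.HolderConjugate.conjExponent h1).symm
      have hq0 : q ≠ 0 := hpq.ne_zero
      have h1q : 1/q + 1/α = 1 := by
        rw [one_div, one_div]; exact hpq.inv_add_inv_eq_one
      set F : ℝ → ℝ≥0∞ := fun ρ => (K r ρ * w ρ) ^ (1/q) with hF
      set G : ℝ → ℝ≥0∞ := fun ρ => (K r ρ * w ρ) ^ (1/α) * f ρ with hG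
      have hsplit : ∀ ρ, K r ρ * f ρ * w ρ = (F * G) ρ := by
        intro ρ
        simp only [hF, hG, Pi.mul_apply]
        rw [← mul_assoc,
          ← ENNReal.rpow_add_of_nonneg _ _ hpq.one_div_nonneg hpq.symm.one_div_nonneg,
          h1q, ENNReal.rpow_one]
        ring
      have hFm : AEMeasurable F μ := (((hKr r).mul hw).pow_const _).aemeasurable
      have hGm : AEMeasurable G μ := ((((hKr r).mul hw).pow_const _).mul hf).aemeasurable
      have hold := ENNReal.lintegral_mul_le_Lp_mul_Lq μ hpq hFm hGm
      have hFp : ∀ ρ, F ρ ^ q = K r ρ * w ρ := by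
        intro ρ
        simp only [hF]
        rw [← ENNReal.rpow_mul, one_div, inv_mul_cancel₀ hq0, ENNReal.rpow_one]
      have hGp : ∀ ρ, G ρ ^ α = K r ρ * f ρ ^ α * w ρ := by
        intro ρ
        simp only [hG]
        rw [ENNReal.mul_rpow_of_nonneg _ _ hα0.le, ← ENNReal.rpow_mul, one_div,
          inv_mul_cancel₀ hα', ENNReal.rpow_one]
        ring
      simp only [hFp, hGp] at hold
      have hold2 : (∫⁻ ρ, K r ρ * f ρ * w ρ ∂μ)
          ≤ (∫⁻ ρ, K r ρ * w ρ ∂μ) ^ (1/q) * (∫⁻ ρ, K r ρ * f ρ ^ α * w ρ ∂μ) ^ (1/α) := by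
        calc (∫⁻ ρ, K r ρ * f ρ * w ρ ∂μ) = ∫⁻ ρ, (F * G) ρ ∂μ := by
              exact lintegral_congr hsplit
          _ ≤ _ := hold
      calc (∫⁻ ρ, K r ρ * f ρ * w ρ ∂μ) ^ α
          ≤ ((∫⁻ ρ, K r ρ * w ρ ∂μ) ^ (1/q) * (∫⁻ ρ, K r ρ * f ρ ^ α * w ρ ∂μ) ^ (1/α)) ^ α :=
            ENNReal.rpow_le_rpow hold2 hα0.le
        _ = (∫⁻ ρ, K r ρ * w ρ ∂μ) ^ ((1/q) * α) * (∫⁻ ρ, K r ρ * f ρ ^ α * w ρ ∂μ) ^ ((1/α) * α) := by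
            rw [ENNReal.mul_rpow_of_nonneg _ _ hα0.le, ← ENNReal.rpow_mul, ← ENNReal.rpow_mul]
        _ = (∫⁻ ρ, K r ρ * w ρ ∂μ) ^ (α - 1) * (∫⁻ ρ, K r ρ * f ρ ^ α * w ρ ∂μ) := by
            have h1 : (1/q) * α = α - 1 := by
              rw [hq]; field_simp
            have h2 : (1/α) * α = 1 := by field_simp
            rw [h1, h2, ENNReal.rpow_one]
        _ ≤ A ^ (α - 1) * (∫⁻ ρ, K r ρ * f ρ ^ α * w ρ ∂μ) := by
            exact mul_le_mul_left (ENNReal.rpow_le_rpow hAr (by linarith)) _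
  -- integrate
  have hAp : A ^ (α - 1) ≠ ∞ := ENNReal.rpow_ne_top_of_nonneg (by linarith) hAfin
  have hmeas2 : AEMeasurable (Function.uncurry fun r ρ =>
      (f ρ ^ α * w ρ) * (K r ρ * w r)) (μ.prod μ) := by
    apply Measurable.aemeasurable
    apply Measurable.mul
    · exact ((hf.comp measurable_snd).pow_const _).mul (hw.comp measurable_snd)
    · exact (hK.comp (measurable_fst.prodMk measurable_snd)).mul (hw.comp measurable_fst)
  calc ∫⁻ r, (∫⁻ ρ, K r ρ * f ρ * w ρ ∂μ) ^ α * w r ∂μ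
      ≤ ∫⁻ r, (A ^ (α - 1) * ∫⁻ ρ, K r ρ * f ρ ^ α * w ρ ∂μ) * w r ∂μ := by
        refine lintegral_mono_ae ?_
        filter_upwards [hA] with r hAr
        exact mul_le_mul_left (key r hAr) _
    _ = A ^ (α - 1) * ∫⁻ r, (∫⁻ ρ, K r ρ * f ρ ^ α * w ρ ∂μ) * w r ∂μ := by
        simp_rw [mul_assoc]
        exact lintegral_const_mul' _ _ hAp
    _ = A ^ (α - 1) * ∫⁻ r, ∫⁻ ρ, (f ρ ^ α * w ρ) * (K r ρ * w r) ∂μ ∂μ := by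
        congr 1
        refine lintegral_congr fun r => ?_
        rw [← lintegral_mul_const' (w r) _ (hwfin r)]
        refine lintegral_congr fun ρ => ?_
        ring
    _ = A ^ (α - 1) * ∫⁻ ρ, ∫⁻ r, (f ρ ^ α * w ρ) * (K r ρ * w r) ∂μ ∂μ := by
        rw [lintegral_lintegral_swap hmeas2]
    _ = A ^ (α - 1) * ∫⁻ ρ, (f ρ ^ α * w ρ) * ∫⁻ r, K r ρ * w r ∂μ ∂μ := by
        congr 1
        refine lintegral_congr fun ρ => ?_
        refine lintegral_const_mul' _ _ ?_
        exact ENNReal.mul_ne_top (ENNReal.rpow_ne_top_of_nonneg hα0.le (hffin ρ)) (hwfin ρ)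
    _ ≤ A ^ (α - 1) * ∫⁻ ρ, (f ρ ^ α * w ρ) * B ∂μ := by
        refine mul_le_mul_right ?_ _
        refine lintegral_mono_ae ?_
        filter_upwards [hB] with ρ hBr
        exact mul_le_mul_right hBr _
    _ = A ^ (α - 1) * B * ∫⁻ ρ, f ρ ^ α * w ρ ∂μ := by
        rw [lintegral_mul_const' _ _ hBfin]; ring


set_option maxHeartbeats 1000000 in
/-- Estimate (5.8) from the proof of Lemma 5.2: for every `α ≥ 1` there is `C_α > 0`
independent of `k` such that `‖𝒦_k φ‖_{L^α(r^{n−1}dr)} ≤ C_α k⁻¹ ‖φ‖_{L^α(r^{n−1}dr)}`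
for every `k ≥ 3`. -/
theorem stmt_12
    (n : ℕ) (hn : 2 ≤ n) (Rs : ℝ) (hRs : 0 < Rs)
    (p b : ℝ → ℝ) (hpcont : ContinuousOn p (Icc 0 Rs)) (hbcont : ContinuousOn b (Icc 0 Rs))
    (𝒦 : ℕ → (ℝ → ℝ) → ℝ → ℝ)
    (h𝒦 : ∀ k : ℕ, 2 ≤ k → ∀ φ : ℝ → ℝ, ∀ r : ℝ,
      𝒦 k φ r = r ^ (k - 1) * p r *
        ((k / (n + 2 * (k - 1) : ℝ)) * (∫ ρ in r..Rs, b ρ * φ ρ / ρ ^ (k - 1))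
         - (1 - k / (n + 2 * (k - 1) : ℝ)) *
             (∫ ρ in (0:ℝ)..r, ρ ^ (n + k - 1) * b ρ * φ ρ) / r ^ (n + 2 * (k - 1))
         + (1 - k / (n + 2 * (k - 1) : ℝ)) *
             (∫ ρ in (0:ℝ)..Rs, ρ ^ (n + k - 1) * b ρ * φ ρ) / Rs ^ (n + 2 * (k - 1)))) :
    ∀ α : ℝ, 1 ≤ α →
      ∃ C > (0:ℝ), ∀ k : ℕ, 3 ≤ k → ∀ φ : ℝ → ℝ, Measurable φ →
        IntervalIntegrable (fun r => |φ r| ^ α * r ^ (n - 1)) volume 0 Rs →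
        (∫ r in (0:ℝ)..Rs, |𝒦 k φ r| ^ α * r ^ (n - 1)) ^ (1 / α) ≤
          C * (k : ℝ)⁻¹ * (∫ r in (0:ℝ)..Rs, |φ r| ^ α * r ^ (n - 1)) ^ (1 / α) := by
  obtain ⟨Mp, hMp0, hMp⟩ : ∃ M : ℝ, 0 ≤ M ∧ ∀ x ∈ Icc 0 Rs, |p x| ≤ M := by
    obtain ⟨M, hM⟩ := isCompact_Icc.exists_bound_of_continuousOn hpcont
    exact ⟨max M 0, le_max_right _ _, fun x hx => (hM x hx).trans (le_max_left _ _)⟩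
  obtain ⟨Mb, hMb0, hMb⟩ : ∃ M : ℝ, 0 ≤ M ∧ ∀ x ∈ Icc 0 Rs, |b x| ≤ M := by
    obtain ⟨M, hM⟩ := isCompact_Icc.exists_bound_of_continuousOn hbcont
    exact ⟨max M 0, le_max_right _ _, fun x hx => (hM x hx).trans (le_max_left _ _)⟩
  intro α hα
  have hα0 : (0:ℝ) < α := zero_lt_one.trans_le hα
  refine ⟨9 * Rs * Mp * Mb + 1, by positivity, ?_⟩
  intro k hk φ hφ hφint
  have hk3 : (3:ℝ) ≤ (k:ℝ) := by exact_mod_cast hk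
  have hkpos : (0:ℝ) < k := by linarith
  have hn2 : (2:ℝ) ≤ (n:ℝ) := by exact_mod_cast hn
  have hrhs0 : 0 ≤ ∫ r in (0:ℝ)..Rs, |φ r| ^ α * r ^ (n - 1) :=
    intervalIntegral.integral_nonneg hRs.le
      (fun u hu => mul_nonneg (Real.rpow_nonneg (abs_nonneg _) _) (pow_nonneg hu.1 _))
  have hrhsp0 : 0 ≤ (∫ r in (0:ℝ)..Rs, |φ r| ^ α * r ^ (n - 1)) ^ (1/α) :=
    Real.rpow_nonneg hrhs0 _
  by_cases hKint : IntervalIntegrable (fun r => |𝒦 k φ r| ^ α * r ^ (n - 1)) volume 0 Rs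
  swap
  · rw [intervalIntegral.integral_undef hKint, Real.zero_rpow (one_div_ne_zero hα0.ne')]
    have : (0:ℝ) < 9 * Rs * Mp * Mb + 1 := by positivity
    exact mul_nonneg (mul_nonneg this.le (inv_nonneg.mpr hkpos.le)) hrhsp0
  -- main case
  set w : ℝ → ℝ≥0∞ := fun ρ => ENNReal.ofReal (ρ ^ (n-1)) with hw
  set f : ℝ → ℝ≥0∞ := fun ρ => ENNReal.ofReal |φ ρ| with hf
  set K1 : ℝ → ℝ → ℝ≥0∞ := fun r ρ =>
    if r < ρ then ENNReal.ofReal (r^(k-1) / ρ^(k-1) / ρ^(n-1)) else 0 with hK1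
  set K2 : ℝ → ℝ → ℝ≥0∞ := fun r ρ =>
    if ρ ≤ r then ENNReal.ofReal (ρ^(n+k-1) * r^(k-1) / r^(n+2*(k-1)) / ρ^(n-1)) else 0 with hK2
  set K3 : ℝ → ℝ → ℝ≥0∞ := fun r ρ =>
    ENNReal.ofReal (ρ^(n+k-1) * r^(k-1) / Rs^(n+2*(k-1)) / ρ^(n-1)) with hK3
  set K : ℝ → ℝ → ℝ≥0∞ := fun r ρ => K1 r ρ + K2 r ρ + K3 r ρ with hKdef
  have hwm : Measurable w := (measurable_id.pow_const (n-1)).ennreal_ofReal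
  have hfm : Measurable f := hφ.abs.ennreal_ofReal
  have hK1m : Measurable (Function.uncurry K1) := by
    refine Measurable.ite (measurableSet_lt measurable_fst measurable_snd) ?_ measurable_const
    exact (((measurable_fst.pow_const _).div (measurable_snd.pow_const _)).div
      (measurable_snd.pow_const _)).ennreal_ofReal
  have hK2m : Measurable (Function.uncurry K2) := by
    refine Measurable.ite (measurableSet_le measurable_snd measurable_fst) ?_ measurable_const
    exact ((((measurable_snd.pow_const _).mul (measurable_fst.pow_const _)).div
      (measurable_fst.pow_const _)).div (measurable_snd.pow_const _)).ennreal_ofReal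
  have hK3m : Measurable (Function.uncurry K3) :=
    ((((measurable_snd.pow_const _).mul (measurable_fst.pow_const _)).div
      measurable_const).div (measurable_snd.pow_const _)).ennreal_ofReal
  have hKm : Measurable (Function.uncurry K) := (hK1m.add hK2m).add hK3m
  have claim : ∀ (u v cc : ℝ), 0 ≤ u → u ≤ v → 0 ≤ cc →
      ∀ (g m : ℝ → ℝ) (KK : ℝ → ℝ≥0∞),
      (∀ ρ ∈ Ioc u v, 0 ≤ m ρ) →
      (∀ ρ ∈ Ioc u v, |g ρ| ≤ Mb * |φ ρ| * m ρ) →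
      (∀ ρ ∈ Ioc u v, KK ρ = ENNReal.ofReal (cc * m ρ / ρ^(n-1))) →
      ENNReal.ofReal (cc * |∫ ρ in u..v, g ρ|)
        ≤ ENNReal.ofReal Mb * ∫⁻ ρ in Ioc u v, KK ρ * (f ρ * w ρ) := by
    intro u v cc hu huv hcc g m KK hm hg hKK
    calc ENNReal.ofReal (cc * |∫ ρ in u..v, g ρ|)
        ≤ ENNReal.ofReal (cc * ∫ ρ in u..v, |g ρ|) := by
          refine ENNReal.ofReal_le_ofReal (mul_le_mul_of_nonneg_left ?_ hcc)
          simpa [Real.norm_eq_abs] using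
            intervalIntegral.norm_integral_le_integral_norm (f := g) (μ := volume) huv
      _ = ENNReal.ofReal cc * ENNReal.ofReal (∫ ρ in Ioc u v, |g ρ|) := by
          rw [intervalIntegral.integral_of_le huv, ENNReal.ofReal_mul hcc]
      _ ≤ ENNReal.ofReal cc * ∫⁻ ρ in Ioc u v, ENNReal.ofReal |g ρ| :=
          mul_le_mul_right (ofReal_int_le _ _) _
      _ = ∫⁻ ρ in Ioc u v, ENNReal.ofReal cc * ENNReal.ofReal |g ρ| :=
          (lintegral_const_mul' _ _ ENNReal.ofReal_ne_top).symm
      _ ≤ ∫⁻ ρ in Ioc u v, ENNReal.ofReal Mb * (KK ρ * (f ρ * w ρ)) := by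
          refine lintegral_mono_ae ((ae_restrict_iff' measurableSet_Ioc).2
            (ae_of_all _ fun ρ hρ => ?_))
          have hρ0 : 0 < ρ := lt_of_le_of_lt hu hρ.1
          rw [← ENNReal.ofReal_mul hcc, hKK ρ hρ]
          calc ENNReal.ofReal (cc * |g ρ|)
              ≤ ENNReal.ofReal (cc * (Mb * |φ ρ| * m ρ)) :=
                ENNReal.ofReal_le_ofReal (mul_le_mul_of_nonneg_left (hg ρ hρ) hcc)
            _ = ENNReal.ofReal (Mb * ((cc * m ρ / ρ^(n-1)) * (|φ ρ| * ρ^(n-1)))) := by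
                congr 1
                field_simp
                try ring
            _ = ENNReal.ofReal Mb * (ENNReal.ofReal (cc * m ρ / ρ^(n-1)) * (f ρ * w ρ)) := by
                simp only [hf, hw]
                rw [ENNReal.ofReal_mul hMb0,
                  ENNReal.ofReal_mul (div_nonneg (mul_nonneg hcc (hm ρ hρ)) (pow_nonneg hρ0.le _)),
                  ENNReal.ofReal_mul (abs_nonneg _)]
      _ = ENNReal.ofReal Mb * ∫⁻ ρ in Ioc u v, KK ρ * (f ρ * w ρ) :=
          lintegral_const_mul' _ _ ENNReal.ofReal_ne_top
  have stepA : ∀ r ∈ Ioc (0:ℝ) Rs, ENNReal.ofReal |𝒦 k φ r|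
      ≤ (ENNReal.ofReal Mp * ENNReal.ofReal Mb) * ∫⁻ ρ in Ioc (0:ℝ) Rs, K r ρ * f ρ * w ρ := by
    intro r hr
    have hr0 : (0:ℝ) < r := hr.1
    have hrR : r ≤ Rs := hr.2
    have hrne : r ≠ 0 := hr0.ne'
    have hden : (0:ℝ) < (n:ℝ) + 2*((k:ℝ)-1) := by linarith
    rw [h𝒦 k (by omega) φ r]
    set N1 : ℝ := ∫ ρ in r..Rs, b ρ * φ ρ / ρ ^ (k - 1) with hN1d
    set N2 : ℝ := ∫ ρ in (0:ℝ)..r, ρ ^ (n + k - 1) * b ρ * φ ρ with hN2d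
    set N3 : ℝ := ∫ ρ in (0:ℝ)..Rs, ρ ^ (n + k - 1) * b ρ * φ ρ with hN3d
    have habs : |r ^ (k - 1) * p r * ((k:ℝ) / ((n:ℝ) + 2 * ((k:ℝ) - 1)) * N1
        - (1 - (k:ℝ) / ((n:ℝ) + 2 * ((k:ℝ) - 1))) * N2 / r ^ (n + 2 * (k - 1))
        + (1 - (k:ℝ) / ((n:ℝ) + 2 * ((k:ℝ) - 1))) * N3 / Rs ^ (n + 2 * (k - 1)))|
        ≤ Mp * (r^(k-1) * |N1| + (r^(k-1) / r^(n+2*(k-1))) * |N2|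
          + (r^(k-1) / Rs^(n+2*(k-1))) * |N3|) := by
      set θ : ℝ := (k:ℝ) / ((n:ℝ) + 2 * ((k:ℝ) - 1)) with hθd
      have hθ0 : 0 ≤ θ := div_nonneg (Nat.cast_nonneg k) hden.le
      have hθ1 : θ ≤ 1 := by rw [hθd, div_le_one hden]; linarith
      have h1θ0 : 0 ≤ 1 - θ := by linarith
      have h1θ1 : 1 - θ ≤ 1 := by linarith
      have hE : (0:ℝ) < r ^ (n + 2 * (k - 1)) := pow_pos hr0 _
      have hERs : (0:ℝ) < Rs ^ (n + 2 * (k - 1)) := pow_pos hRs _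
      have t1 : |θ * N1| ≤ |N1| := by
        rw [abs_mul, abs_of_nonneg hθ0]
        exact mul_le_of_le_one_left (abs_nonneg _) hθ1
      have t2 : |(1 - θ) * N2 / r ^ (n + 2 * (k - 1))| ≤ |N2| / r ^ (n + 2 * (k - 1)) := by
        rw [abs_div, abs_mul, abs_of_nonneg h1θ0, abs_of_pos hE]
        gcongr
        exact mul_le_of_le_one_left (abs_nonneg _) h1θ1
      have t3 : |(1 - θ) * N3 / Rs ^ (n + 2 * (k - 1))| ≤ |N3| / Rs ^ (n + 2 * (k - 1)) := by
        rw [abs_div, abs_mul, abs_of_nonneg h1θ0, abs_of_pos hERs]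
        gcongr
        exact mul_le_of_le_one_left (abs_nonneg _) h1θ1
      have hXabs : |θ * N1 - (1 - θ) * N2 / r ^ (n + 2 * (k - 1))
          + (1 - θ) * N3 / Rs ^ (n + 2 * (k - 1))|
          ≤ |N1| + |N2| / r ^ (n + 2 * (k - 1)) + |N3| / Rs ^ (n + 2 * (k - 1)) := by
        calc |θ * N1 - (1 - θ) * N2 / r ^ (n + 2 * (k - 1))
            + (1 - θ) * N3 / Rs ^ (n + 2 * (k - 1))|
            ≤ |θ * N1 - (1 - θ) * N2 / r ^ (n + 2 * (k - 1))|
              + |(1 - θ) * N3 / Rs ^ (n + 2 * (k - 1))| := abs_add_le _ _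
          _ ≤ (|θ * N1| + |(1 - θ) * N2 / r ^ (n + 2 * (k - 1))|)
              + |(1 - θ) * N3 / Rs ^ (n + 2 * (k - 1))| := by
              gcongr
              exact abs_sub _ _
          _ ≤ (|N1| + |N2| / r ^ (n + 2 * (k - 1))) + |N3| / Rs ^ (n + 2 * (k - 1)) :=
              add_le_add (add_le_add t1 t2) t3
          _ = _ := by ring
      calc |r ^ (k - 1) * p r * (θ * N1 - (1 - θ) * N2 / r ^ (n + 2 * (k - 1))
          + (1 - θ) * N3 / Rs ^ (n + 2 * (k - 1)))|
          = r ^ (k-1) * |p r| * |θ * N1 - (1 - θ) * N2 / r ^ (n + 2 * (k - 1))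
            + (1 - θ) * N3 / Rs ^ (n + 2 * (k - 1))| := by
            rw [abs_mul, abs_mul, abs_of_nonneg (pow_nonneg hr0.le (k-1))]
        _ ≤ r ^ (k-1) * Mp * (|N1| + |N2| / r ^ (n + 2 * (k - 1))
            + |N3| / Rs ^ (n + 2 * (k - 1))) := by
            refine mul_le_mul ?_ hXabs (abs_nonneg _) (by positivity)
            exact mul_le_mul_of_nonneg_left (hMp r ⟨hr0.le, hrR⟩) (pow_nonneg hr0.le _)
        _ = Mp * (r^(k-1) * |N1| + (r^(k-1) / r^(n+2*(k-1))) * |N2|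
            + (r^(k-1) / Rs^(n+2*(k-1))) * |N3|) := by ring
    refine le_trans (ENNReal.ofReal_le_ofReal habs) ?_
    have s1 : Measurable fun ρ => K1 r ρ * (f ρ * w ρ) :=
      (hK1m.of_uncurry_left).mul (hfm.mul hwm)
    have s2 : Measurable fun ρ => K2 r ρ * (f ρ * w ρ) :=
      (hK2m.of_uncurry_left).mul (hfm.mul hwm)
    have hU1 : ENNReal.ofReal (r^(k-1) * |N1|)
        ≤ ENNReal.ofReal Mb * ∫⁻ ρ in Ioc r Rs, K1 r ρ * (f ρ * w ρ) := by
      rw [hN1d]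
      refine claim r Rs (r^(k-1)) hr0.le hrR (pow_nonneg hr0.le _)
        _ (fun ρ => (ρ^(k-1))⁻¹) _
        (fun ρ hρ => inv_nonneg.mpr (pow_nonneg (hr0.trans hρ.1).le _))
        (fun ρ hρ => ?_) (fun ρ hρ => ?_)
      · have hρ0 : 0 < ρ := hr0.trans hρ.1
        rw [abs_div, abs_mul, abs_of_pos (pow_pos hρ0 _), div_eq_mul_inv]
        exact mul_le_mul_of_nonneg_right
          (mul_le_mul_of_nonneg_right (hMb ρ ⟨hρ0.le, hρ.2⟩) (abs_nonneg _)) (by positivity)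
      · simp only [hK1, if_pos hρ.1]
        congr 1
        try ring
    have hU2 : ENNReal.ofReal ((r^(k-1) / r^(n+2*(k-1))) * |N2|)
        ≤ ENNReal.ofReal Mb * ∫⁻ ρ in Ioc (0:ℝ) r, K2 r ρ * (f ρ * w ρ) := by
      rw [hN2d]
      refine claim 0 r (r^(k-1) / r^(n+2*(k-1))) le_rfl hr0.le
        (div_nonneg (pow_nonneg hr0.le _) (pow_nonneg hr0.le _))
        _ (fun ρ => ρ^(n+k-1)) _ (fun ρ hρ => pow_nonneg hρ.1.le _) (fun ρ hρ => ?_)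
        (fun ρ hρ => ?_)
      · have hρ0 : 0 < ρ := hρ.1
        rw [abs_mul, abs_mul, abs_of_pos (pow_pos hρ0 _)]
        calc ρ^(n+k-1) * |b ρ| * |φ ρ| ≤ ρ^(n+k-1) * Mb * |φ ρ| := by
              refine mul_le_mul_of_nonneg_right
                (mul_le_mul_of_nonneg_left (hMb ρ ⟨hρ0.le, hρ.2.trans hrR⟩)
                  (pow_nonneg hρ0.le _)) (abs_nonneg _)
          _ = Mb * |φ ρ| * ρ^(n+k-1) := by ring
      · simp only [hK2, if_pos hρ.2]
        congr 1
        try ring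
    have hU3 : ENNReal.ofReal ((r^(k-1) / Rs^(n+2*(k-1))) * |N3|)
        ≤ ENNReal.ofReal Mb * ∫⁻ ρ in Ioc (0:ℝ) Rs, K3 r ρ * (f ρ * w ρ) := by
      rw [hN3d]
      refine claim 0 Rs (r^(k-1) / Rs^(n+2*(k-1))) le_rfl hRs.le
        (div_nonneg (pow_nonneg hr0.le _) (pow_nonneg hRs.le _))
        _ (fun ρ => ρ^(n+k-1)) _ (fun ρ hρ => pow_nonneg hρ.1.le _) (fun ρ hρ => ?_)
        (fun ρ hρ => ?_)
      · have hρ0 : 0 < ρ := hρ.1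
        rw [abs_mul, abs_mul, abs_of_pos (pow_pos hρ0 _)]
        calc ρ^(n+k-1) * |b ρ| * |φ ρ| ≤ ρ^(n+k-1) * Mb * |φ ρ| := by
              refine mul_le_mul_of_nonneg_right
                (mul_le_mul_of_nonneg_left (hMb ρ ⟨hρ0.le, hρ.2⟩)
                  (pow_nonneg hρ0.le _)) (abs_nonneg _)
          _ = Mb * |φ ρ| * ρ^(n+k-1) := by ring
      · simp only [hK3]
        congr 1
        try ring
    have hext1 : ∫⁻ ρ in Ioc (0:ℝ) Rs, K1 r ρ * (f ρ * w ρ)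
        = ∫⁻ ρ in Ioc r Rs, K1 r ρ * (f ρ * w ρ) := by
      rw [← Ioc_union_Ioc_eq_Ioc hr0.le hrR,
        lintegral_union measurableSet_Ioc (Ioc_disjoint_Ioc_of_le le_rfl),
        setLIntegral_congr_fun_ae (s := Ioc (0:ℝ) r) measurableSet_Ioc (g := fun _ => 0)
          (ae_of_all _ fun ρ hρ => by simp only [hK1, if_neg (not_lt.mpr hρ.2), zero_mul]),
        lintegral_zero, zero_add]
    have hext2 : ∫⁻ ρ in Ioc (0:ℝ) Rs, K2 r ρ * (f ρ * w ρ)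
        = ∫⁻ ρ in Ioc (0:ℝ) r, K2 r ρ * (f ρ * w ρ) := by
      rw [← Ioc_union_Ioc_eq_Ioc hr0.le hrR,
        lintegral_union measurableSet_Ioc (Ioc_disjoint_Ioc_of_le le_rfl),
        setLIntegral_congr_fun_ae (s := Ioc r Rs) measurableSet_Ioc (g := fun _ => 0)
          (ae_of_all _ fun ρ hρ => by simp only [hK2, if_neg (not_le.mpr hρ.1), zero_mul]),
        lintegral_zero, add_zero]
    have hsum : ∫⁻ ρ in Ioc (0:ℝ) Rs, K r ρ * f ρ * w ρ
        = (∫⁻ ρ in Ioc (0:ℝ) Rs, K1 r ρ * (f ρ * w ρ))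
          + (∫⁻ ρ in Ioc (0:ℝ) Rs, K2 r ρ * (f ρ * w ρ))
          + (∫⁻ ρ in Ioc (0:ℝ) Rs, K3 r ρ * (f ρ * w ρ)) := by
      have e : ∀ ρ, K r ρ * f ρ * w ρ
          = (K1 r ρ * (f ρ * w ρ) + K2 r ρ * (f ρ * w ρ)) + K3 r ρ * (f ρ * w ρ) := by
        intro ρ; simp only [hKdef]; ring
      simp_rw [e]
      rw [lintegral_add_left (f := fun ρ => K1 r ρ * (f ρ * w ρ) + K2 r ρ * (f ρ * w ρ)) (s1.add s2), lintegral_add_left s1]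
    calc ENNReal.ofReal (Mp * (r^(k-1) * |N1| + (r^(k-1) / r^(n+2*(k-1))) * |N2|
          + (r^(k-1) / Rs^(n+2*(k-1))) * |N3|))
        = ENNReal.ofReal Mp * (ENNReal.ofReal (r^(k-1) * |N1|)
          + ENNReal.ofReal ((r^(k-1) / r^(n+2*(k-1))) * |N2|)
          + ENNReal.ofReal ((r^(k-1) / Rs^(n+2*(k-1))) * |N3|)) := by
          rw [ENNReal.ofReal_mul hMp0, ENNReal.ofReal_add (by positivity) (by positivity),
            ENNReal.ofReal_add (by positivity) (by positivity)]
      _ ≤ ENNReal.ofReal Mp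
          * (ENNReal.ofReal Mb * (∫⁻ ρ in Ioc (0:ℝ) Rs, K1 r ρ * (f ρ * w ρ))
            + ENNReal.ofReal Mb * (∫⁻ ρ in Ioc (0:ℝ) Rs, K2 r ρ * (f ρ * w ρ))
            + ENNReal.ofReal Mb * (∫⁻ ρ in Ioc (0:ℝ) Rs, K3 r ρ * (f ρ * w ρ))) := by
          refine mul_le_mul_right (add_le_add (add_le_add ?_ ?_) ?_) _
          · rw [hext1]; exact hU1
          · rw [hext2]; exact hU2
          · exact hU3
      _ = (ENNReal.ofReal Mp * ENNReal.ofReal Mb)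
          * ((∫⁻ ρ in Ioc (0:ℝ) Rs, K1 r ρ * (f ρ * w ρ))
            + (∫⁻ ρ in Ioc (0:ℝ) Rs, K2 r ρ * (f ρ * w ρ))
            + (∫⁻ ρ in Ioc (0:ℝ) Rs, K3 r ρ * (f ρ * w ρ))) := by ring
      _ = (ENNReal.ofReal Mp * ENNReal.ofReal Mb)
          * ∫⁻ ρ in Ioc (0:ℝ) Rs, K r ρ * f ρ * w ρ := by rw [hsum]
  have piece : ∀ (u v : ℝ), u ≤ v → ∀ (g : ℝ → ℝ≥0∞) (gr : ℝ → ℝ),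
      (∀ᵐ x ∂(volume : Measure ℝ), x ∈ Ioc u v → g x = ENNReal.ofReal (gr x)) →
      IntegrableOn gr (Ioc u v) → (∀ x ∈ Ioc u v, 0 ≤ gr x) →
      ((∫ x in u..v, gr x) ≤ 3*Rs/(k:ℝ)) →
      (∫⁻ x in Ioc u v, g x) ≤ ENNReal.ofReal (3*Rs/(k:ℝ)) := by
    intro u v huv g gr hgr hint h0 hval
    rw [setLIntegral_congr_fun_ae measurableSet_Ioc hgr]
    exact lint_le_of_int huv hint h0 hval
  have hofsum : ENNReal.ofReal (3*Rs/(k:ℝ)) + ENNReal.ofReal (3*Rs/(k:ℝ))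
      + ENNReal.ofReal (3*Rs/(k:ℝ)) = ENNReal.ofReal (9*Rs/(k:ℝ)) := by
    rw [← ENNReal.ofReal_add (by positivity) (by positivity),
      ← ENNReal.ofReal_add (by positivity) (by positivity)]
    congr 1; ring
  have hpow_r : ∀ (x : ℝ) (a bb cc : ℕ), a + bb = cc → x^a * x^bb = x^cc := by
    intro x a bb cc h; rw [← pow_add, h]
  have condA : ∀ r ∈ Ioc (0:ℝ) Rs,
      (∫⁻ ρ in Ioc (0:ℝ) Rs, K r ρ * w ρ) ≤ ENNReal.ofReal (9*Rs/(k:ℝ)) := by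
    intro r hr
    have hr0 : (0:ℝ) < r := hr.1
    have hrR : r ≤ Rs := hr.2
    have hrne : r ≠ 0 := hr0.ne'
    have h0ui : (0:ℝ) ∉ uIcc r Rs := by
      rw [uIcc_of_le hrR]; exact fun h => absurd h.1 (not_le.mpr hr0)
    have m1 : Measurable fun ρ => K1 r ρ * w ρ := (hK1m.of_uncurry_left).mul hwm
    have m2 : Measurable fun ρ => K2 r ρ * w ρ := (hK2m.of_uncurry_left).mul hwm
    have hsplit : (∫⁻ ρ in Ioc (0:ℝ) Rs, K r ρ * w ρ)
        = (∫⁻ ρ in Ioc (0:ℝ) Rs, K1 r ρ * w ρ) + (∫⁻ ρ in Ioc (0:ℝ) Rs, K2 r ρ * w ρ)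
          + (∫⁻ ρ in Ioc (0:ℝ) Rs, K3 r ρ * w ρ) := by
      have e : ∀ ρ, K r ρ * w ρ = (K1 r ρ * w ρ + K2 r ρ * w ρ) + K3 r ρ * w ρ := by
        intro ρ; simp only [hKdef]; ring
      simp_rw [e]
      rw [lintegral_add_left (f := fun ρ => K1 r ρ * w ρ + K2 r ρ * w ρ) (m1.add m2), lintegral_add_left m1]
    rw [hsplit, ← hofsum]
    have p1 : (∫⁻ ρ in Ioc (0:ℝ) Rs, K1 r ρ * w ρ) ≤ ENNReal.ofReal (3*Rs/(k:ℝ)) := by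
      have hvan : ∫⁻ ρ in Ioc (0:ℝ) r, K1 r ρ * w ρ = 0 := by
        rw [setLIntegral_congr_fun_ae measurableSet_Ioc (g := fun _ => 0) (ae_of_all _ fun ρ hρ => by
          simp only [hK1, if_neg (not_lt.mpr hρ.2), zero_mul]), lintegral_zero]
      rw [← Ioc_union_Ioc_eq_Ioc hr0.le hrR,
        lintegral_union measurableSet_Ioc (Ioc_disjoint_Ioc_of_le le_rfl), hvan, zero_add]
      refine piece r Rs hrR _ (fun x => r^(k-1) * x ^ (-(((k-2):ℕ):ℤ) - 1))
        (ae_of_all _ fun x hx => ?_) ?_ ?_ ?_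
      · have hx0 : 0 < x := hr0.trans hx.1
        simp only [hK1, if_pos hx.1, hw]
        rw [← ENNReal.ofReal_mul (by positivity)]
        congr 1
        have hz : (x:ℝ) ^ (-(((k-2):ℕ):ℤ) - 1) = (x^(k-1))⁻¹ := by
          have he : (-(((k-2):ℕ):ℤ) - 1) = -(((k-1):ℕ):ℤ) := by
            push_cast [Nat.cast_sub (by omega : (2:ℕ) ≤ k), Nat.cast_sub (by omega : (1:ℕ) ≤ k)]
            ring
          rw [he, zpow_neg, zpow_natCast]
        rw [hz]
        field_simp
        try ring
      · exact ((intervalIntegral.intervalIntegrable_zpow (Or.inr h0ui)).const_mul _).1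
      · intro x hx
        exact mul_nonneg (pow_nonneg hr0.le _) (zpow_nonneg (hr0.trans hx.1).le _)
      · rw [intervalIntegral.integral_const_mul]
        calc r^(k-1) * ∫ x in r..Rs, x ^ (-(((k-2):ℕ):ℤ) - 1)
            ≤ r^(k-1) * ((r^(k-2))⁻¹ / ((k-2 : ℕ):ℝ)) := by
              refine mul_le_mul_of_nonneg_left (int_zpow_le hr0 hrR (by omega)) (by positivity)
          _ = r / ((k:ℝ) - 2) := by
              rw [Nat.cast_sub (by omega : (2:ℕ) ≤ k)]
              have h1 : r^(k-1) = r^(k-2) * r := by rw [← pow_succ]; congr 1; omega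
              push_cast
              rw [h1, show r^(k-2) * r * ((r^(k-2))⁻¹ / ((k:ℝ)-2))
                = (r^(k-2) * (r^(k-2))⁻¹) * (r / ((k:ℝ)-2)) from by ring,
                mul_inv_cancel₀ (pow_ne_zero _ hrne), one_mul]
          _ ≤ 3*Rs/(k:ℝ) := by
              rw [div_le_div_iff₀ (by linarith) hkpos]
              nlinarith [mul_le_mul_of_nonneg_right hrR hkpos.le,
                mul_nonneg hRs.le (by linarith : (0:ℝ) ≤ 2*(k:ℝ)-6)]
    have p2 : (∫⁻ ρ in Ioc (0:ℝ) Rs, K2 r ρ * w ρ) ≤ ENNReal.ofReal (3*Rs/(k:ℝ)) := by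
      have hvan : ∫⁻ ρ in Ioc r Rs, K2 r ρ * w ρ = 0 := by
        rw [setLIntegral_congr_fun_ae measurableSet_Ioc (g := fun _ => 0) (ae_of_all _ fun ρ hρ => by
          simp only [hK2, if_neg (not_le.mpr hρ.1), zero_mul]), lintegral_zero]
      rw [← Ioc_union_Ioc_eq_Ioc hr0.le hrR,
        lintegral_union measurableSet_Ioc (Ioc_disjoint_Ioc_of_le le_rfl), hvan, add_zero]
      refine piece 0 r hr0.le _ (fun x => x^(n+k-1) * (r^(k-1) / r^(n+2*(k-1))))
        (ae_of_all _ fun x hx => ?_) ?_ ?_ ?_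
      · have hx0 : 0 < x := hx.1
        simp only [hK2, if_pos hx.2, hw]
        rw [← ENNReal.ofReal_mul (by positivity)]
        congr 1
        field_simp
        try ring
      · exact ((intervalIntegral.intervalIntegrable_pow _).mul_const _).1
      · intro x hx
        exact mul_nonneg (pow_nonneg hx.1.le _) (by positivity)
      · rw [intervalIntegral.integral_mul_const, int_pow_eq]
        have he1 : n+k-1+1 = n+k := by omega
        have he2 : ((n+k-1 : ℕ):ℝ) + 1 = (n:ℝ) + k := by
          rw [Nat.cast_sub (by omega : (1:ℕ) ≤ n+k)]
          push_cast
          try ring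
        rw [he1, he2]
        have hval : r^(n+k) / ((n:ℝ)+k) * (r^(k-1) / r^(n+2*(k-1))) = r / ((n:ℝ)+k) := by
          rw [div_mul_div_comm, hpow_r r (n+k) (k-1) (1 + (n+2*(k-1))) (by omega),
            pow_add, pow_one, mul_comm ((n:ℝ)+k) (r^(n+2*(k-1))),
            mul_comm r (r^(n+2*(k-1))), mul_div_mul_left _ _ (pow_ne_zero _ hrne)]
        rw [hval, div_le_div_iff₀ (by linarith) hkpos]
        nlinarith [mul_le_mul_of_nonneg_right hrR hkpos.le,
          mul_nonneg hRs.le (by linarith : (0:ℝ) ≤ 2*(k:ℝ) + 3*(n:ℝ) - 6)]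
    have p3 : (∫⁻ ρ in Ioc (0:ℝ) Rs, K3 r ρ * w ρ) ≤ ENNReal.ofReal (3*Rs/(k:ℝ)) := by
      refine piece 0 Rs hRs.le _ (fun x => x^(n+k-1) * (r^(k-1) / Rs^(n+2*(k-1))))
        (ae_of_all _ fun x hx => ?_) ?_ ?_ ?_
      · have hx0 : 0 < x := hx.1
        simp only [hK3, hw]
        rw [← ENNReal.ofReal_mul (by positivity)]
        congr 1
        field_simp
        try ring
      · exact ((intervalIntegral.intervalIntegrable_pow _).mul_const _).1
      · intro x hx
        exact mul_nonneg (pow_nonneg hx.1.le _) (by positivity)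
      · rw [intervalIntegral.integral_mul_const, int_pow_eq]
        have he1 : n+k-1+1 = n+k := by omega
        have he2 : ((n+k-1 : ℕ):ℝ) + 1 = (n:ℝ) + k := by
          rw [Nat.cast_sub (by omega : (1:ℕ) ≤ n+k)]
          push_cast
          try ring
        rw [he1, he2]
        calc Rs^(n+k) / ((n:ℝ)+k) * (r^(k-1) / Rs^(n+2*(k-1)))
            ≤ Rs^(n+k) / ((n:ℝ)+k) * (Rs^(k-1) / Rs^(n+2*(k-1))) := by
              have hh := pow_le_pow_left₀ hr0.le hrR (k-1)
              gcongr
          _ = Rs / ((n:ℝ)+k) := by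
              rw [div_mul_div_comm, hpow_r Rs (n+k) (k-1) (1 + (n+2*(k-1))) (by omega),
                pow_add, pow_one, mul_comm ((n:ℝ)+k) (Rs^(n+2*(k-1))),
                mul_comm Rs (Rs^(n+2*(k-1))), mul_div_mul_left _ _ (pow_ne_zero _ hRs.ne')]
          _ ≤ 3*Rs/(k:ℝ) := by
              rw [div_le_div_iff₀ (by linarith) hkpos]
              nlinarith [mul_nonneg hRs.le (by linarith : (0:ℝ) ≤ 2*(k:ℝ) + 3*(n:ℝ) - 6)]
    exact add_le_add (add_le_add p1 p2) p3
  have condB : ∀ ρ ∈ Ioc (0:ℝ) Rs,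
      (∫⁻ r in Ioc (0:ℝ) Rs, K r ρ * w r) ≤ ENNReal.ofReal (9*Rs/(k:ℝ)) := by
    intro ρ hρ
    have hρ0 : (0:ℝ) < ρ := hρ.1
    have hρR : ρ ≤ Rs := hρ.2
    have hρne : ρ ≠ 0 := hρ0.ne'
    have h0ui : (0:ℝ) ∉ uIcc ρ Rs := by
      rw [uIcc_of_le hρR]; exact fun h => absurd h.1 (not_le.mpr hρ0)
    have hane : ∀ᵐ x ∂(volume : Measure ℝ), x ≠ ρ := by
      have hc : ({ρ} : Set ℝ)ᶜ ∈ ae (volume : Measure ℝ) :=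
        compl_mem_ae_iff.2 (measure_singleton ρ)
      filter_upwards [hc] with x hx using hx
    have m1 : Measurable fun r => K1 r ρ * w r :=
      (hK1m.comp (measurable_id.prodMk measurable_const)).mul hwm
    have m2 : Measurable fun r => K2 r ρ * w r :=
      (hK2m.comp (measurable_id.prodMk measurable_const)).mul hwm
    have hsplit : (∫⁻ r in Ioc (0:ℝ) Rs, K r ρ * w r)
        = (∫⁻ r in Ioc (0:ℝ) Rs, K1 r ρ * w r) + (∫⁻ r in Ioc (0:ℝ) Rs, K2 r ρ * w r)
          + (∫⁻ r in Ioc (0:ℝ) Rs, K3 r ρ * w r) := by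
      have e : ∀ r, K r ρ * w r = (K1 r ρ * w r + K2 r ρ * w r) + K3 r ρ * w r := by
        intro r; simp only [hKdef]; ring
      simp_rw [e]
      rw [lintegral_add_left (f := fun r => K1 r ρ * w r + K2 r ρ * w r) (m1.add m2), lintegral_add_left m1]
    rw [hsplit, ← hofsum]
    have q1 : (∫⁻ r in Ioc (0:ℝ) Rs, K1 r ρ * w r) ≤ ENNReal.ofReal (3*Rs/(k:ℝ)) := by
      have hvan : ∫⁻ r in Ioc ρ Rs, K1 r ρ * w r = 0 := by
        rw [setLIntegral_congr_fun_ae measurableSet_Ioc (g := fun _ => 0) (ae_of_all _ fun r hr => by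
          simp only [hK1, if_neg (not_lt.mpr hr.1.le), zero_mul]), lintegral_zero]
      rw [← Ioc_union_Ioc_eq_Ioc hρ0.le hρR,
        lintegral_union measurableSet_Ioc (Ioc_disjoint_Ioc_of_le le_rfl), hvan, add_zero]
      refine piece 0 ρ hρ0.le _ (fun x => x^(n+k-2) * ((ρ^(k-1) * ρ^(n-1))⁻¹)) ?_ ?_ ?_ ?_
      · filter_upwards [hane] with x hxρ hx
        have hx0 : 0 < x := hx.1
        have hxlt : x < ρ := lt_of_le_of_ne hx.2 hxρ
        simp only [hK1, if_pos hxlt, hw]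
        rw [← ENNReal.ofReal_mul (by positivity)]
        congr 1
        rw [← hpow_r x (k-1) (n-1) (n+k-2) (by omega)]
        field_simp
        try ring
      · exact ((intervalIntegral.intervalIntegrable_pow _).mul_const _).1
      · intro x hx
        exact mul_nonneg (pow_nonneg hx.1.le _) (by positivity)
      · rw [intervalIntegral.integral_mul_const, int_pow_eq]
        have he1 : n+k-2+1 = n+k-1 := by omega
        have he2 : ((n+k-2 : ℕ):ℝ) + 1 = (n:ℝ) + k - 1 := by
          rw [Nat.cast_sub (by omega : (2:ℕ) ≤ n+k)]
          push_cast
          try ring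
        rw [he1, he2]
        have hval : ρ^(n+k-1) / ((n:ℝ)+k-1) * (ρ^(k-1) * ρ^(n-1))⁻¹ = ρ / ((n:ℝ)+k-1) := by
          rw [hpow_r ρ (k-1) (n-1) (n+k-2) (by omega)]
          have h1 : ρ^(n+k-1) = ρ^(n+k-2) * ρ := by rw [← pow_succ]; congr 1; omega
          rw [h1, show ρ^(n+k-2) * ρ / ((n:ℝ)+k-1) * (ρ^(n+k-2))⁻¹
            = (ρ^(n+k-2) * (ρ^(n+k-2))⁻¹) * (ρ / ((n:ℝ)+k-1)) from by ring,
            mul_inv_cancel₀ (pow_ne_zero _ hρne), one_mul]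
        rw [hval, div_le_div_iff₀ (by linarith) hkpos]
        nlinarith [mul_le_mul_of_nonneg_right hρR hkpos.le,
          mul_nonneg hRs.le (by linarith : (0:ℝ) ≤ 2*(k:ℝ) + 3*(n:ℝ) - 9)]
    have q2 : (∫⁻ r in Ioc (0:ℝ) Rs, K2 r ρ * w r) ≤ ENNReal.ofReal (3*Rs/(k:ℝ)) := by
      have hvan : ∫⁻ r in Ioc (0:ℝ) ρ, K2 r ρ * w r = 0 := by
        rw [setLIntegral_congr_fun_ae measurableSet_Ioc (g := fun _ => 0) (by
          filter_upwards [hane] with r hrρ hr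
          simp only [hK2, if_neg (not_le.mpr (lt_of_le_of_ne hr.2 hrρ)), zero_mul]),
          lintegral_zero]
      rw [← Ioc_union_Ioc_eq_Ioc hρ0.le hρR,
        lintegral_union measurableSet_Ioc (Ioc_disjoint_Ioc_of_le le_rfl), hvan, zero_add]
      refine piece ρ Rs hρR _ (fun x => (ρ^(n+k-1) * (ρ^(n-1))⁻¹) * x ^ (-(((k-1):ℕ):ℤ) - 1))
        (ae_of_all _ fun x hx => ?_) ?_ ?_ ?_
      · have hx0 : 0 < x := hρ0.trans hx.1
        simp only [hK2, if_pos hx.1.le, hw]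
        rw [← ENNReal.ofReal_mul (by positivity)]
        congr 1
        have hz : x ^ (-(((k-1):ℕ):ℤ) - 1) = (x^k)⁻¹ := by
          have he : (-(((k-1):ℕ):ℤ) - 1) = -((k:ℕ):ℤ) := by
            push_cast [Nat.cast_sub (by omega : (1:ℕ) ≤ k)]; ring
          rw [he, zpow_neg, zpow_natCast]
        rw [hz]
        have hxE : x^(n+2*(k-1)) = (x^(k-1) * x^(n-1)) * x^k := by
          rw [hpow_r x (k-1) (n-1) (n+k-2) (by omega), hpow_r x (n+k-2) k (n+2*(k-1)) (by omega)]
        field_simp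
        rw [hxE]
      · exact ((intervalIntegral.intervalIntegrable_zpow (Or.inr h0ui)).const_mul _).1
      · intro x hx
        exact mul_nonneg (by positivity) (zpow_nonneg (hρ0.trans hx.1).le _)
      · rw [intervalIntegral.integral_const_mul]
        calc (ρ^(n+k-1) * (ρ^(n-1))⁻¹) * ∫ x in ρ..Rs, x ^ (-(((k-1):ℕ):ℤ) - 1)
            ≤ (ρ^(n+k-1) * (ρ^(n-1))⁻¹) * ((ρ^(k-1))⁻¹ / ((k-1 : ℕ):ℝ)) := by
              refine mul_le_mul_of_nonneg_left (int_zpow_le hρ0 hρR (by omega)) (by positivity)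
          _ = ρ / ((k:ℝ) - 1) := by
              rw [Nat.cast_sub (by omega : (1:ℕ) ≤ k)]
              have h1 : ρ^(n+k-1) = (ρ^(n-1) * ρ^(k-1)) * ρ := by
                rw [← hpow_r ρ (n+k-2) 1 (n+k-1) (by omega),
                  ← hpow_r ρ (n-1) (k-1) (n+k-2) (by omega), pow_one]
              push_cast
              rw [h1, show (ρ^(n-1) * ρ^(k-1)) * ρ * (ρ^(n-1))⁻¹ * ((ρ^(k-1))⁻¹ / ((k:ℝ)-1))
                = (ρ^(n-1) * (ρ^(n-1))⁻¹) * (ρ^(k-1) * (ρ^(k-1))⁻¹) * (ρ / ((k:ℝ)-1)) from by ring,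
                mul_inv_cancel₀ (pow_ne_zero _ hρne), mul_inv_cancel₀ (pow_ne_zero _ hρne),
                one_mul, one_mul]
          _ ≤ 3*Rs/(k:ℝ) := by
              rw [div_le_div_iff₀ (by linarith) hkpos]
              nlinarith [mul_le_mul_of_nonneg_right hρR hkpos.le,
                mul_nonneg hRs.le (by linarith : (0:ℝ) ≤ 2*(k:ℝ) - 3)]
    have q3 : (∫⁻ r in Ioc (0:ℝ) Rs, K3 r ρ * w r) ≤ ENNReal.ofReal (3*Rs/(k:ℝ)) := by
      have e2 : ∀ y : ℝ, y ≠ 0 → y^(n+k-1) * (y^(n-1))⁻¹ = y^k := by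
        intro y hy
        rw [show n+k-1 = k + (n-1) from by omega, pow_add]
        field_simp
      refine piece 0 Rs hRs.le _
        (fun x => x^(n+k-2) * (ρ^(n+k-1) * (ρ^(n-1))⁻¹ / Rs^(n+2*(k-1))))
        (ae_of_all _ fun x hx => ?_) ?_ ?_ ?_
      · have hx0 : 0 < x := hx.1
        simp only [hK3, hw]
        rw [← ENNReal.ofReal_mul (by positivity)]
        congr 1
        rw [← hpow_r x (k-1) (n-1) (n+k-2) (by omega)]
        field_simp
        try ring
      · exact ((intervalIntegral.intervalIntegrable_pow _).mul_const _).1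
      · intro x hx
        exact mul_nonneg (pow_nonneg hx.1.le _) (by positivity)
      · rw [intervalIntegral.integral_mul_const, int_pow_eq]
        have he1 : n+k-2+1 = n+k-1 := by omega
        have he2 : ((n+k-2 : ℕ):ℝ) + 1 = (n:ℝ) + k - 1 := by
          rw [Nat.cast_sub (by omega : (2:ℕ) ≤ n+k)]
          push_cast
          try ring
        rw [he1, he2]
        calc Rs^(n+k-1) / ((n:ℝ)+k-1) * (ρ^(n+k-1) * (ρ^(n-1))⁻¹ / Rs^(n+2*(k-1)))
            ≤ Rs^(n+k-1) / ((n:ℝ)+k-1) * (Rs^(n+k-1) * (Rs^(n-1))⁻¹ / Rs^(n+2*(k-1))) := by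
              have hmono : ρ^(n+k-1) * (ρ^(n-1))⁻¹ ≤ Rs^(n+k-1) * (Rs^(n-1))⁻¹ := by
                rw [e2 ρ hρne, e2 Rs hRs.ne']
                exact pow_le_pow_left₀ hρ0.le hρR k
              refine mul_le_mul_of_nonneg_left ?_ (div_nonneg (by positivity) (by linarith))
              gcongr
          _ = Rs / ((n:ℝ)+k-1) := by
              rw [e2 Rs hRs.ne', div_mul_div_comm,
                hpow_r Rs (n+k-1) k (1 + (n+2*(k-1))) (by omega), pow_add, pow_one,
                mul_comm ((n:ℝ)+k-1) (Rs^(n+2*(k-1))), mul_comm Rs (Rs^(n+2*(k-1))),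
                mul_div_mul_left _ _ (pow_ne_zero _ hRs.ne')]
          _ ≤ 3*Rs/(k:ℝ) := by
              rw [div_le_div_iff₀ (by linarith) hkpos]
              nlinarith [mul_nonneg hRs.le (by linarith : (0:ℝ) ≤ 2*(k:ℝ) + 3*(n:ℝ) - 9)]
    exact add_le_add (add_le_add q1 q2) q3
  have hschur := schur_aux (μ := volume.restrict (Ioc (0:ℝ) Rs)) hKm hfm hwm
    (fun x => ofReal_ne_top) (fun x => ofReal_ne_top) hα ofReal_ne_top ofReal_ne_top
    ((ae_restrict_iff' measurableSet_Ioc).2 (ae_of_all _ condA))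
    ((ae_restrict_iff' measurableSet_Ioc).2 (ae_of_all _ condB))
  have hZeq : ENNReal.ofReal (∫ r in (0:ℝ)..Rs, |φ r| ^ α * r ^ (n - 1))
      = ∫⁻ ρ in Ioc (0:ℝ) Rs, ENNReal.ofReal (|φ ρ| ^ α * ρ ^ (n-1)) := by
    rw [intervalIntegral.integral_of_le hRs.le]
    exact ofReal_integral_eq_lintegral_ofReal hφint.1
      ((ae_restrict_iff' measurableSet_Ioc).2 (ae_of_all _ fun x hx =>
        mul_nonneg (Real.rpow_nonneg (abs_nonneg _) _) (pow_nonneg hx.1.le _)))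
  have hZfw : (∫⁻ ρ in Ioc (0:ℝ) Rs, ENNReal.ofReal (|φ ρ| ^ α * ρ ^ (n-1)))
      = ∫⁻ ρ in Ioc (0:ℝ) Rs, f ρ ^ α * w ρ := by
    refine setLIntegral_congr_fun_ae measurableSet_Ioc (ae_of_all _ fun ρ hρ => ?_)
    rw [ENNReal.ofReal_mul (Real.rpow_nonneg (abs_nonneg _) _),
      ← ENNReal.ofReal_rpow_of_nonneg (abs_nonneg _) hα0.le]
  set Z := ∫⁻ ρ in Ioc (0:ℝ) Rs, f ρ ^ α * w ρ with hZ
  have hZne : Z ≠ ⊤ := by rw [← hZfw, ← hZeq]; exact ofReal_ne_top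
  have hZto : Z.toReal = ∫ r in (0:ℝ)..Rs, |φ r| ^ α * r ^ (n - 1) := by
    rw [← hZfw, ← hZeq, ENNReal.toReal_ofReal hrhs0]
  have hLHS : (∫ r in (0:ℝ)..Rs, |𝒦 k φ r| ^ α * r ^ (n - 1))
      = (∫⁻ r in Ioc (0:ℝ) Rs, ENNReal.ofReal (|𝒦 k φ r| ^ α * r ^ (n-1))).toReal := by
    rw [intervalIntegral.integral_of_le hRs.le]
    exact integral_eq_lintegral_of_nonneg_ae
      ((ae_restrict_iff' measurableSet_Ioc).2 (ae_of_all _ fun x hx =>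
        mul_nonneg (Real.rpow_nonneg (abs_nonneg _) _) (pow_nonneg hx.1.le _)))
      hKint.1.aestronglyMeasurable
  have hGcongr : (∫⁻ r in Ioc (0:ℝ) Rs, ENNReal.ofReal (|𝒦 k φ r| ^ α * r ^ (n-1)))
      = ∫⁻ r in Ioc (0:ℝ) Rs, (ENNReal.ofReal |𝒦 k φ r|) ^ α * w r :=
    setLIntegral_congr_fun_ae measurableSet_Ioc (ae_of_all _ fun r hr => by
      rw [ENNReal.ofReal_mul (Real.rpow_nonneg (abs_nonneg _) _),
        ← ENNReal.ofReal_rpow_of_nonneg (abs_nonneg _) hα0.le])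
  set c : ℝ≥0∞ := ENNReal.ofReal Mp * ENNReal.ofReal Mb * ENNReal.ofReal (9*Rs/(k:ℝ)) with hc
  have hcne : c ≠ ⊤ :=
    ENNReal.mul_ne_top (ENNReal.mul_ne_top ofReal_ne_top ofReal_ne_top) ofReal_ne_top
  have hchain : (∫⁻ r in Ioc (0:ℝ) Rs, ENNReal.ofReal (|𝒦 k φ r| ^ α * r ^ (n-1)))
      ≤ c ^ α * Z := by
    rw [hGcongr]
    calc ∫⁻ r in Ioc (0:ℝ) Rs, (ENNReal.ofReal |𝒦 k φ r|) ^ α * w r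
        ≤ ∫⁻ r in Ioc (0:ℝ) Rs, ((ENNReal.ofReal Mp * ENNReal.ofReal Mb)
            * (∫⁻ ρ in Ioc (0:ℝ) Rs, K r ρ * f ρ * w ρ)) ^ α * w r := by
          refine lintegral_mono_ae ((ae_restrict_iff' measurableSet_Ioc).2
            (ae_of_all _ fun r hr => ?_))
          exact mul_le_mul_left (ENNReal.rpow_le_rpow (stepA r hr) hα0.le) _
      _ = (ENNReal.ofReal Mp * ENNReal.ofReal Mb) ^ α
          * ∫⁻ r in Ioc (0:ℝ) Rs, (∫⁻ ρ in Ioc (0:ℝ) Rs, K r ρ * f ρ * w ρ) ^ α * w r := by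
          rw [← lintegral_const_mul' _ _ (ENNReal.rpow_ne_top_of_nonneg hα0.le
            (ENNReal.mul_ne_top ofReal_ne_top ofReal_ne_top))]
          refine lintegral_congr fun r => ?_
          rw [ENNReal.mul_rpow_of_nonneg _ _ hα0.le, mul_assoc]
      _ ≤ (ENNReal.ofReal Mp * ENNReal.ofReal Mb) ^ α
          * (ENNReal.ofReal (9*Rs/(k:ℝ)) ^ (α - 1) * ENNReal.ofReal (9*Rs/(k:ℝ)) * Z) :=
          mul_le_mul_right hschur _
      _ = c ^ α * Z := by
          rw [hc]
          have hD : ENNReal.ofReal (9*Rs/(k:ℝ)) ^ (α - 1) * ENNReal.ofReal (9*Rs/(k:ℝ))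
              = ENNReal.ofReal (9*Rs/(k:ℝ)) ^ α := by
            nth_rewrite 2 [← ENNReal.rpow_one (ENNReal.ofReal (9*Rs/(k:ℝ)))]
            rw [← ENNReal.rpow_add_of_nonneg _ _ (by linarith) zero_le_one, sub_add_cancel]
          rw [hD]
          simp only [ENNReal.mul_rpow_of_nonneg _ _ hα0.le]
          ring
  have hfinal : ((∫⁻ r in Ioc (0:ℝ) Rs, ENNReal.ofReal (|𝒦 k φ r| ^ α * r ^ (n-1))).toReal) ^ (1/α)
      ≤ (Mp * Mb * (9*Rs/(k:ℝ))) * Z.toReal ^ (1/α) := by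
    rw [ENNReal.toReal_rpow]
    have h1 : (∫⁻ r in Ioc (0:ℝ) Rs, ENNReal.ofReal (|𝒦 k φ r| ^ α * r ^ (n-1))) ^ (1/α)
        ≤ (c^α * Z)^(1/α) := ENNReal.rpow_le_rpow hchain (by positivity)
    have h2 : (c^α * Z)^(1/α) = c * Z^(1/α) := by
      rw [ENNReal.mul_rpow_of_nonneg _ _ (by positivity), ← ENNReal.rpow_mul,
        mul_one_div_cancel hα0.ne', ENNReal.rpow_one]
    have h3 : (c * Z^(1/α)) ≠ ⊤ :=
      ENNReal.mul_ne_top hcne (ENNReal.rpow_ne_top_of_nonneg (by positivity) hZne)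
    calc ((∫⁻ r in Ioc (0:ℝ) Rs, ENNReal.ofReal (|𝒦 k φ r| ^ α * r ^ (n-1)))^(1/α)).toReal
        ≤ ((c^α * Z)^(1/α)).toReal := ENNReal.toReal_mono (h2 ▸ h3) h1
      _ = (c * Z^(1/α)).toReal := by rw [h2]
      _ = c.toReal * (Z^(1/α)).toReal := ENNReal.toReal_mul
      _ = (Mp * Mb * (9*Rs/(k:ℝ))) * Z.toReal ^ (1/α) := by
          rw [← ENNReal.toReal_rpow]
          congr 1
          rw [hc, ENNReal.toReal_mul, ENNReal.toReal_mul, ENNReal.toReal_ofReal hMp0,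
            ENNReal.toReal_ofReal hMb0, ENNReal.toReal_ofReal (by positivity)]
  rw [hLHS]
  refine le_trans hfinal ?_
  rw [← hZto]
  refine mul_le_mul_of_nonneg_right ?_ (Real.rpow_nonneg ENNReal.toReal_nonneg _)
  have he : Mp * Mb * (9*Rs/(k:ℝ)) = (9*Rs*Mp*Mb) * (k:ℝ)⁻¹ := by
    field_simp
  rw [he]
  exact mul_le_mul_of_nonneg_right (by linarith) (inv_nonneg.mpr hkpos.le)
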